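/- Fix ε ∈ {+1,−1} and λ, u ∈ ℂ. Assume θ_{01}((λ+4εlη)/2, τ/2) ≠ 0, θ_{01}(λ/2, τ/2) ≠ 0, and that θ_{11}(η,τ), θ_{10}(η,τ), θ_{00}(η,τ), θ_{01}(η,τ) are all nonzero; set p' := −θ_{00}((λ+4εlη)/2, τ/2)/θ_{01}((λ+4εlη)/2, τ/2). Then the difference operator α := W_0(u)·ρ^l(S^0) + W_3(u)·ρ^l(S^3) − p'·(W_1(u)·ρ^l(S^1) + i·W_2(u)·ρ^l(S^2)) satisfies (α f_ε(λ,u,·))(z) = (θ_{01}(λ/2,τ/2)/θ_{01}((λ+4εlη)/2,τ/2)) · 2θ_{11}(u−2lη,τ) · f_ε(λ,u+2η,z) for every z ∈ ℂ with θ_{11}(2z,τ) ≠ 0. -/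

import Mathlib

noncomputable section

open Complex

/-- Theta function with characteristics `θ_{ab}(z,τ)`. -/
def theta (a b : ℝ) (z τ : ℂ) : ℂ :=
  ∑' n : ℤ, Complex.exp ((Real.pi : ℂ) * Complex.I * ((a : ℂ)/2 + (n : ℂ))^2 * τ +
    2 * (Real.pi : ℂ) * Complex.I * ((a : ℂ)/2 + (n : ℂ)) * ((b : ℂ)/2 + z))

/-- `[z;a]_k := ∏_{j=0}^{k-1} θ₁₁(z+a+2jη,τ) θ₁₁(-z+a+2jη,τ)`. -/
def brK (η τ z a : ℂ) (k : ℕ) : ℂ :=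
  ∏ j ∈ Finset.range k,
    theta 1 1 (z + a + 2*(j:ℂ)*η) τ * theta 1 1 (-z + a + 2*(j:ℂ)*η) τ

/-- `f_ε(λ,u,z) := [z;(ελ+u)/2+(-l+1)η]_{2l}`, with `tl = 2l`. -/
def fEps (η τ l : ℂ) (tl : ℕ) (ε lam u z : ℂ) : ℂ :=
  brK η τ z ((ε*lam + u)/2 + (-l+1)*η) tl

/-- `ω_λ(u;v)(z) := [z;(λ+u-v)/2+(-l+1)η]_{2l}`. -/
def omegaFn (η τ l : ℂ) (tl : ℕ) (lam u v z : ℂ) : ℂ :=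
  brK η τ z ((lam + u - v)/2 + (-l+1)*η) tl

def s0f (η τ z : ℂ) : ℂ := theta 1 1 η τ * theta 1 1 (2*z) τ
def s1f (η τ z : ℂ) : ℂ := theta 1 0 η τ * theta 1 0 (2*z) τ
def s2f (η τ z : ℂ) : ℂ := Complex.I * theta 0 0 η τ * theta 0 0 (2*z) τ
def s3f (η τ z : ℂ) : ℂ := theta 0 1 η τ * theta 0 1 (2*z) τ

/-- The difference operator `ρ^l(S^a)` associated to the coefficient function `s`. -/
def rhoS (η τ l : ℂ) (s : ℂ → ℂ) : (ℂ → ℂ) →ₗ[ℂ] (ℂ → ℂ) where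
  toFun f := fun z =>
    (s (z - l*η) * f (z + η) - s (-z - l*η) * f (z - η)) / theta 1 1 (2*z) τ
  map_add' f g := by
    funext z
    simp only [Pi.add_apply]
    ring
  map_smul' c f := by
    funext z
    simp only [Pi.smul_apply, smul_eq_mul, RingHom.id_apply]
    ring

def W0 (η τ u : ℂ) : ℂ := theta 1 1 u τ / theta 1 1 η τ
def W1 (η τ u : ℂ) : ℂ := theta 1 0 u τ / theta 1 0 η τ
def W2 (η τ u : ℂ) : ℂ := theta 0 0 u τ / theta 0 0 η τ
def W3 (η τ u : ℂ) : ℂ := theta 0 1 u τ / theta 0 1 η τ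

/-- `θ^{(2l)}_{00}(u) := ∏_{j=0}^{2l-1} θ₀₀(u+(2j-2l+1)η,τ)`, with `tl = 2l`. -/
def theta2l (η τ : ℂ) (tl : ℕ) (u : ℂ) : ℂ :=
  ∏ j ∈ Finset.range tl, theta 0 0 (u + (2*(j:ℂ) - (tl:ℂ) + 1)*η) τ

/-- The gauge transformation matrix `M_λ(v)`. -/
def Mlam (τ lam v : ℂ) : Matrix (Fin 2) (Fin 2) ℂ :=
  !![-theta 0 0 ((lam - v)/2) (τ/2), -theta 0 0 ((lam + v)/2) (τ/2);
     theta 0 1 ((lam - v)/2) (τ/2), theta 0 1 ((lam + v)/2) (τ/2)]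

/-- The `L`-operator as a 2×2 matrix of difference operators. -/
def LopM (η τ l u : ℂ) : Matrix (Fin 2) (Fin 2) (Module.End ℂ (ℂ → ℂ)) :=
  !![W0 η τ u • rhoS η τ l (s0f η τ) + W3 η τ u • rhoS η τ l (s3f η τ),
     W1 η τ u • rhoS η τ l (s1f η τ) - (Complex.I * W2 η τ u) • rhoS η τ l (s2f η τ);
     W1 η τ u • rhoS η τ l (s1f η τ) + (Complex.I * W2 η τ u) • rhoS η τ l (s2f η τ),
     W0 η τ u • rhoS η τ l (s0f η τ) - W3 η τ u • rhoS η τ l (s3f η τ)]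

/-- `N := adj(M_{λ₀+4(j+ε)lη}(v)) · L(u) · M_{λ₀+4jlη}(v)`. -/
def NMat (η τ l lam0 v u : ℂ) (j : ℤ) (ε : ℂ) :
    Matrix (Fin 2) (Fin 2) (Module.End ℂ (ℂ → ℂ)) :=
  ((Mlam τ (lam0 + 4*((j:ℂ)+ε)*l*η) v).adjugate).map
      (algebraMap ℂ (Module.End ℂ (ℂ → ℂ))) *
    LopM η τ l u *
    (Mlam τ (lam0 + 4*(j:ℂ)*l*η) v).map (algebraMap ℂ (Module.End ℂ (ℂ → ℂ)))

/-- The kernel `μ(z,w)` of the Sklyanin form. -/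
def muK (η τ : ℂ) (tl : ℕ) (z w : ℂ) : ℂ :=
  theta 1 1 (2*z) τ * theta 1 1 (2*w) τ /
    ∏ j ∈ Finset.range (tl + 2),
      (theta 0 0 (z + w + (2*(j:ℂ) - (tl:ℂ) - 1)*η) τ *
       theta 0 0 (z - w + (2*(j:ℂ) - (tl:ℂ) - 1)*η) τ)

/-- Integrand of the Sklyanin form. -/
def sklIntegrand (η τ : ℂ) (tl : ℕ) (f g : ℂ → ℂ) (x y : ℝ) : ℂ :=
  (starRingEnd ℂ) (f ((x:ℂ) + (y:ℂ)*Complex.I)) * g ((x:ℂ) + (y:ℂ)*Complex.I) *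
    muK η τ tl ((x:ℂ) + (y:ℂ)*Complex.I) ((x:ℂ) - (y:ℂ)*Complex.I)

/-- The Sklyanin form `⟨f,g⟩` (with `τ = i t₀`). -/
def sklForm (η τ : ℂ) (tl : ℕ) (t0 : ℝ) (f g : ℂ → ℂ) : ℂ :=
  ∫ x in (0:ℝ)..1, ∫ y in (0:ℝ)..t0, sklIntegrand η τ tl f g x y

/-- The constant `C_{2l}`. -/
def C2l (η τ : ℂ) (tl : ℕ) : ℂ :=
  (-2*η * Complex.exp (3*(Real.pi:ℂ)*Complex.I*τ/4)) /
    (theta 1 1 (2*((tl:ℂ)+1)*η) τ *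
      ∏' j : ℕ, (1 - Complex.exp (2*(Real.pi:ℂ)*Complex.I*((j:ℂ)+1)*τ))^3)
namespace SklAux


def thT (a b : ℝ) (z τ : ℂ) (n : ℤ) : ℂ :=
  Complex.exp ((Real.pi : ℂ) * Complex.I * ((a : ℂ)/2 + (n : ℂ))^2 * τ +
    2 * (Real.pi : ℂ) * Complex.I * ((a : ℂ)/2 + (n : ℂ)) * ((b : ℂ)/2 + z))

lemma theta_eq (a b : ℝ) (z τ : ℂ) : theta a b z τ = ∑' n : ℤ, thT a b z τ n := rfl

lemma thT_eq_jacobi (a b : ℝ) (z τ : ℂ) (n : ℤ) :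
    thT a b z τ n
      = Complex.exp ((Real.pi : ℂ) * Complex.I * ((a:ℂ)/2)^2 * τ
          + (Real.pi : ℂ) * Complex.I * (a:ℂ) * ((b:ℂ)/2 + z))
        * jacobiTheta₂_term n ((b:ℂ)/2 + z + (a:ℂ)/2 * τ) τ := by
  rw [thT, jacobiTheta₂_term, ← Complex.exp_add]
  congr 1
  ring

lemma summable_norm_thT (a b : ℝ) {τ : ℂ} (hτ : 0 < τ.im) (z : ℂ) :
    Summable fun n : ℤ => ‖thT a b z τ n‖ := by
  have h : Summable (jacobiTheta₂_term · ((b:ℂ)/2 + z + (a:ℂ)/2 * τ) τ) :=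
    (summable_jacobiTheta₂_term_iff _ τ).mpr hτ
  have h2 := summable_norm_iff.mpr (h.mul_left (Complex.exp ((Real.pi : ℂ) * Complex.I * ((a:ℂ)/2)^2 * τ
          + (Real.pi : ℂ) * Complex.I * (a:ℂ) * ((b:ℂ)/2 + z))))
  refine h2.congr fun n => ?_
  rw [thT_eq_jacobi]

lemma hasSum_theta (a b : ℝ) {τ : ℂ} (hτ : 0 < τ.im) (z : ℂ) :
    HasSum (thT a b z τ) (theta a b z τ) := by
  rw [theta_eq]
  exact (summable_norm_iff.mp (summable_norm_thT a b hτ z)).hasSum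

lemma hasSum_split {F : ℤ × ℤ → ℂ} {S₀ S₁ : ℂ}
    (h₀ : HasSum (fun p : ℤ × ℤ => F (p.1 + p.2, p.1 - p.2)) S₀)
    (h₁ : HasSum (fun p : ℤ × ℤ => F (p.1 + p.2 + 1, p.1 - p.2)) S₁) :
    HasSum F (S₀ + S₁) := by
  classical
  set j₀ : ℤ × ℤ → ℤ × ℤ := fun p => (p.1 + p.2, p.1 - p.2) with hj0
  set j₁ : ℤ × ℤ → ℤ × ℤ := fun p => (p.1 + p.2 + 1, p.1 - p.2) with hj1
  have inj₀ : Function.Injective j₀ := by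
    intro p q h
    simp only [hj0, Prod.mk.injEq] at h
    ext <;> omega
  have inj₁ : Function.Injective j₁ := by
    intro p q h
    simp only [hj1, Prod.mk.injEq] at h
    ext <;> omega
  have hF0 : HasSum (Set.indicator (Set.range j₀) F) S₀ := by
    refine (inj₀.hasSum_iff (fun x hx => Set.indicator_of_notMem hx F)).mp ?_
    exact h₀.congr_fun fun p => Set.indicator_of_mem (Set.mem_range_self p) F
  have hF1 : HasSum (Set.indicator (Set.range j₁) F) S₁ := by
    refine (inj₁.hasSum_iff (fun x hx => Set.indicator_of_notMem hx F)).mp ?_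
    exact h₁.congr_fun fun p => Set.indicator_of_mem (Set.mem_range_self p) F
  have key : ∀ x : ℤ × ℤ,
      Set.indicator (Set.range j₀) F x + Set.indicator (Set.range j₁) F x = F x := by
    rintro ⟨r, s⟩
    rcases Int.even_or_odd (r - s) with ⟨k, hk⟩ | ⟨k, hk⟩
    · rw [Set.indicator_of_mem, Set.indicator_of_notMem]
      · rw [add_zero]
      · rintro ⟨p, hp⟩
        simp only [hj1, Prod.mk.injEq] at hp
        omega
      · exact ⟨(s + k, k), by simp only [hj0, Prod.mk.injEq]; omega⟩
    · rw [Set.indicator_of_notMem, Set.indicator_of_mem]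
      · rw [zero_add]
      · exact ⟨(s + k, k), by simp only [hj1, Prod.mk.injEq]; omega⟩
      · rintro ⟨p, hp⟩
        simp only [hj0, Prod.mk.injEq] at hp
        omega
  exact (hF0.add hF1).congr_fun fun x => (key x).symm



lemma hasSum_mulTheta (a b a' b' : ℝ) (x y : ℂ) {τ : ℂ} (hτ : 0 < τ.im) :
    HasSum (fun p : ℤ × ℤ => thT a b x τ p.1 * thT a' b' y τ p.2)
      (theta a b x τ * theta a' b' y τ) :=
  (hasSum_theta a b hτ x).mul (hasSum_theta a' b' hτ y)
    (summable_mul_of_summable_norm (summable_norm_thT a b hτ x) (summable_norm_thT a' b' hτ y))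

lemma im_half {τ : ℂ} (hτ : 0 < τ.im) : 0 < (τ/2).im := by
  have h : τ/2 = ((2⁻¹ : ℝ) : ℂ) * τ := by push_cast; ring
  rw [h, Complex.im_ofReal_mul]
  linarith

/-- Landen-type: `θ₀₁((x+y)/2, τ/2) θ₀₀((x−y)/2, τ/2) = θ₀₁(x)θ₀₁(y) + θ₁₁(x)θ₁₁(y)`. -/
lemma landen_a (x y : ℂ) {τ : ℂ} (hτ : 0 < τ.im) :
    theta 0 1 ((x+y)/2) (τ/2) * theta 0 0 ((x-y)/2) (τ/2)
      = theta 0 1 x τ * theta 0 1 y τ + theta 1 1 x τ * theta 1 1 y τ := by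
  have hτ2 := im_half hτ
  have hR := hasSum_mulTheta 0 1 0 0 ((x+y)/2) ((x-y)/2) hτ2
  have h₀ : HasSum (fun p : ℤ × ℤ =>
      thT 0 1 ((x+y)/2) (τ/2) (p.1 + p.2) * thT 0 0 ((x-y)/2) (τ/2) (p.1 - p.2))
      (theta 0 1 x τ * theta 0 1 y τ) := by
    refine (hasSum_mulTheta 0 1 0 1 x y hτ).congr_fun fun p => ?_
    rw [thT, thT, thT, thT, ← Complex.exp_add, ← Complex.exp_add]
    congr 1
    push_cast
    ring
  have h₁ : HasSum (fun p : ℤ × ℤ =>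
      thT 0 1 ((x+y)/2) (τ/2) (p.1 + p.2 + 1) * thT 0 0 ((x-y)/2) (τ/2) (p.1 - p.2))
      (theta 1 1 x τ * theta 1 1 y τ) := by
    refine (hasSum_mulTheta 1 1 1 1 x y hτ).congr_fun fun p => ?_
    rw [thT, thT, thT, thT, ← Complex.exp_add, ← Complex.exp_add]
    congr 1
    push_cast
    ring
  exact hR.unique (hasSum_split h₀ h₁)

/-- Landen-type: `θ₀₁((x+y)/2, τ/2) θ₀₁((x−y)/2, τ/2) = θ₀₀(x)θ₀₀(y) − θ₁₀(x)θ₁₀(y)`. -/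
lemma landen_b (x y : ℂ) {τ : ℂ} (hτ : 0 < τ.im) :
    theta 0 1 ((x+y)/2) (τ/2) * theta 0 1 ((x-y)/2) (τ/2)
      = theta 0 0 x τ * theta 0 0 y τ - theta 1 0 x τ * theta 1 0 y τ := by
  have hτ2 := im_half hτ
  have hR := hasSum_mulTheta 0 1 0 1 ((x+y)/2) ((x-y)/2) hτ2
  have h₀ : HasSum (fun p : ℤ × ℤ =>
      thT 0 1 ((x+y)/2) (τ/2) (p.1 + p.2) * thT 0 1 ((x-y)/2) (τ/2) (p.1 - p.2))
      (theta 0 0 x τ * theta 0 0 y τ) := by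
    refine (hasSum_mulTheta 0 0 0 0 x y hτ).congr_fun fun p => ?_
    have e : thT 0 1 ((x+y)/2) (τ/2) (p.1 + p.2) * thT 0 1 ((x-y)/2) (τ/2) (p.1 - p.2)
        = (thT 0 0 x τ p.1 * thT 0 0 y τ p.2)
            * Complex.exp ((p.1 : ℂ) * (2 * (Real.pi : ℂ) * Complex.I)) := by
      rw [thT, thT, thT, thT, ← Complex.exp_add, ← Complex.exp_add, ← Complex.exp_add]
      congr 1
      push_cast
      ring
    rw [e, Complex.exp_int_mul_two_pi_mul_I, mul_one]
  have h₁ : HasSum (fun p : ℤ × ℤ =>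
      thT 0 1 ((x+y)/2) (τ/2) (p.1 + p.2 + 1) * thT 0 1 ((x-y)/2) (τ/2) (p.1 - p.2))
      (-(theta 1 0 x τ * theta 1 0 y τ)) := by
    refine ((hasSum_mulTheta 1 0 1 0 x y hτ).neg).congr_fun fun p => ?_
    have e : thT 0 1 ((x+y)/2) (τ/2) (p.1 + p.2 + 1) * thT 0 1 ((x-y)/2) (τ/2) (p.1 - p.2)
        = (thT 1 0 x τ p.1 * thT 1 0 y τ p.2)
            * (Complex.exp ((p.1 : ℂ) * (2 * (Real.pi : ℂ) * Complex.I))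
                * Complex.exp ((Real.pi : ℂ) * Complex.I)) := by
      rw [thT, thT, thT, thT, ← Complex.exp_add, ← Complex.exp_add, ← Complex.exp_add,
        ← Complex.exp_add]
      congr 1
      push_cast
      ring
    rw [e, Complex.exp_int_mul_two_pi_mul_I, Complex.exp_pi_mul_I]
    ring
  have := hR.unique (hasSum_split h₀ h₁)
  rw [this]
  ring

/-- `θ₀₀(x,τ/2)θ₀₁(y,τ/2) − θ₀₁(x,τ/2)θ₀₀(y,τ/2) = −2 θ₁₁(x+y,τ) θ₁₁(x−y,τ)`. -/
lemma landen_c (x y : ℂ) {τ : ℂ} (hτ : 0 < τ.im) :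
    theta 0 0 x (τ/2) * theta 0 1 y (τ/2) - theta 0 1 x (τ/2) * theta 0 0 y (τ/2)
      = -2 * (theta 1 1 (x+y) τ * theta 1 1 (x-y) τ) := by
  have hτ2 := im_half hτ
  have hL : HasSum (fun p : ℤ × ℤ =>
      thT 0 0 x (τ/2) p.1 * thT 0 1 y (τ/2) p.2 - thT 0 1 x (τ/2) p.1 * thT 0 0 y (τ/2) p.2)
      (theta 0 0 x (τ/2) * theta 0 1 y (τ/2) - theta 0 1 x (τ/2) * theta 0 0 y (τ/2)) :=
    (hasSum_mulTheta 0 0 0 1 x y hτ2).sub (hasSum_mulTheta 0 1 0 0 x y hτ2)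
  have h₀ : HasSum (fun p : ℤ × ℤ =>
      thT 0 0 x (τ/2) (p.1 + p.2) * thT 0 1 y (τ/2) (p.1 - p.2)
        - thT 0 1 x (τ/2) (p.1 + p.2) * thT 0 0 y (τ/2) (p.1 - p.2)) 0 := by
    refine hasSum_zero.congr_fun fun p => ?_
    have e : thT 0 0 x (τ/2) (p.1 + p.2) * thT 0 1 y (τ/2) (p.1 - p.2)
        = (thT 0 1 x (τ/2) (p.1 + p.2) * thT 0 0 y (τ/2) (p.1 - p.2))
            * Complex.exp (((-p.2 : ℤ) : ℂ) * (2 * (Real.pi : ℂ) * Complex.I)) := by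
      rw [thT, thT, thT, thT, ← Complex.exp_add, ← Complex.exp_add, ← Complex.exp_add]
      congr 1
      push_cast
      ring
    rw [e, Complex.exp_int_mul_two_pi_mul_I, mul_one, sub_self]
  have h₁ : HasSum (fun p : ℤ × ℤ =>
      thT 0 0 x (τ/2) (p.1 + p.2 + 1) * thT 0 1 y (τ/2) (p.1 - p.2)
        - thT 0 1 x (τ/2) (p.1 + p.2 + 1) * thT 0 0 y (τ/2) (p.1 - p.2))
      (-2 * (theta 1 1 (x+y) τ * theta 1 1 (x-y) τ)) := by
    refine ((hasSum_mulTheta 1 1 1 1 (x+y) (x-y) hτ).mul_left (-2)).congr_fun fun p => ?_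
    have e1 : thT 0 0 x (τ/2) (p.1 + p.2 + 1) * thT 0 1 y (τ/2) (p.1 - p.2)
        = (thT 1 1 (x+y) τ p.1 * thT 1 1 (x-y) τ p.2)
            * (Complex.exp (((-p.2 - 1 : ℤ) : ℂ) * (2 * (Real.pi : ℂ) * Complex.I))
                * Complex.exp ((Real.pi : ℂ) * Complex.I)) := by
      rw [thT, thT, thT, thT, ← Complex.exp_add, ← Complex.exp_add, ← Complex.exp_add,
        ← Complex.exp_add]
      congr 1
      push_cast
      ring
    have e2 : thT 0 1 x (τ/2) (p.1 + p.2 + 1) * thT 0 0 y (τ/2) (p.1 - p.2)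
        = thT 1 1 (x+y) τ p.1 * thT 1 1 (x-y) τ p.2 := by
      rw [thT, thT, thT, thT, ← Complex.exp_add, ← Complex.exp_add]
      congr 1
      push_cast
      ring
    rw [e1, e2, Complex.exp_int_mul_two_pi_mul_I, Complex.exp_pi_mul_I]
    ring
  have := hL.unique (hasSum_split h₀ h₁)
  rw [this, zero_add]

/-- evenness of `θ₀b` for integer `b`. -/
lemma theta_even (b : ℝ) (k : ℤ) (hb : b = (k : ℝ)) (z τ : ℂ) :
    theta 0 b (-z) τ = theta 0 b z τ := by
  have key : ∀ n : ℤ, thT 0 b (-z) τ n = thT 0 b z τ (-n) := by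
    intro n
    have e : thT 0 b (-z) τ n
        = thT 0 b z τ (-n) * Complex.exp (((n * k : ℤ) : ℂ) * (2 * (Real.pi : ℂ) * Complex.I)) := by
      rw [thT, thT, ← Complex.exp_add]
      congr 1
      rw [hb]
      push_cast
      ring
    rw [e, Complex.exp_int_mul_two_pi_mul_I, mul_one]
  rw [theta_eq, theta_eq]
  calc ∑' n : ℤ, thT 0 b (-z) τ n = ∑' n : ℤ, thT 0 b z τ ((Equiv.neg ℤ) n) := by
        simp only [Equiv.neg_apply]
        exact tsum_congr key
    _ = ∑' n : ℤ, thT 0 b z τ n := (Equiv.neg ℤ).tsum_eq _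



def PP (η τ c : ℂ) (k : ℕ) (w : ℂ) : ℂ :=
  ∏ j ∈ Finset.range k, theta 1 1 (w + c + (2*(j:ℂ)+1)*η) τ

lemma PP_succ (η τ c : ℂ) (k : ℕ) (w : ℂ) :
    PP η τ c (k+1) w = PP η τ c k w * theta 1 1 (w + c + (2*(k:ℂ)+1)*η) τ := by
  rw [PP, PP, Finset.prod_range_succ]

lemma brK_plus (η τ z c : ℂ) (k : ℕ) :
    brK η τ (z+η) c (k+1)
      = PP η τ c (k+1) z * (theta 1 1 (c - η - z) τ * PP η τ c k (-z)) := by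
  rw [brK, Finset.prod_mul_distrib]
  congr 1
  · rw [PP]
    refine Finset.prod_congr rfl fun j _ => ?_
    congr 1
    ring
  · rw [PP, Finset.prod_range_succ', mul_comm]
    congr 1
    · congr 1
      push_cast
      ring
    · refine Finset.prod_congr rfl fun j _ => ?_
      congr 1
      push_cast
      ring

lemma brK_minus (η τ z c : ℂ) (k : ℕ) :
    brK η τ (z-η) c (k+1)
      = (theta 1 1 (c - η + z) τ * PP η τ c k z) * PP η τ c (k+1) (-z) := by
  rw [brK, Finset.prod_mul_distrib]
  congr 1
  · rw [PP, Finset.prod_range_succ', mul_comm]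
    congr 1
    · congr 1
      push_cast
      ring
    · refine Finset.prod_congr rfl fun j _ => ?_
      congr 1
      push_cast
      ring
  · rw [PP]
    refine Finset.prod_congr rfl fun j _ => ?_
    congr 1
    ring

lemma brK_new (η τ z c : ℂ) (k : ℕ) :
    brK η τ z (c+η) k = PP η τ c k z * PP η τ c k (-z) := by
  rw [brK, Finset.prod_mul_distrib]
  congr 1 <;>
  · rw [PP]
    refine Finset.prod_congr rfl fun j _ => ?_
    congr 1
    ring


end SklAux

open SklAux in
/-- The operator α acts on `f_ε(λ,u,·)` with eigenfactor and shift `u ↦ u+2η`. -/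
theorem stmt1 (τ η l : ℂ) (hτ : 0 < τ.im) (tl : ℕ) (htl : 0 < tl) (hl : (tl:ℂ) = 2*l)
    (ε : ℂ) (hε : ε = 1 ∨ ε = -1) (lam u : ℂ)
    (h1 : theta 0 1 ((lam + 4*ε*l*η)/2) (τ/2) ≠ 0)
    (h2 : theta 0 1 (lam/2) (τ/2) ≠ 0)
    (h11 : theta 1 1 η τ ≠ 0) (h10 : theta 1 0 η τ ≠ 0)
    (h00 : theta 0 0 η τ ≠ 0) (h01 : theta 0 1 η τ ≠ 0)
    (p' : ℂ)
    (hp' : p' = -theta 0 0 ((lam + 4*ε*l*η)/2) (τ/2) / theta 0 1 ((lam + 4*ε*l*η)/2) (τ/2)) :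
    ∀ z : ℂ, theta 1 1 (2*z) τ ≠ 0 →
      (W0 η τ u • rhoS η τ l (s0f η τ) + W3 η τ u • rhoS η τ l (s3f η τ)
        - p' • (W1 η τ u • rhoS η τ l (s1f η τ)
                 + (Complex.I * W2 η τ u) • rhoS η τ l (s2f η τ)))
        (fun w => fEps η τ l tl ε lam u w) z
      = (theta 0 1 (lam/2) (τ/2) / theta 0 1 ((lam + 4*ε*l*η)/2) (τ/2)) *
          (2 * theta 1 1 (u - 2*l*η) τ) * fEps η τ l tl ε lam (u + 2*η) z := by
  intro z hz
  obtain ⟨t, rfl⟩ : ∃ t, tl = t + 1 := ⟨tl - 1, (Nat.succ_pred_eq_of_pos htl).symm⟩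
  simp only [LinearMap.sub_apply, LinearMap.add_apply, LinearMap.smul_apply, rhoS,
    LinearMap.coe_mk, AddHom.coe_mk, Pi.add_apply, Pi.sub_apply, Pi.smul_apply, smul_eq_mul]
  set c : ℂ := (ε*lam + u)/2 + (-l+1)*η with hc
  set m0 : ℂ := (lam + 4*ε*l*η)/2 with hm0
  -- rewrite the fEps occurrences as brK with base point c
  have hfp : fEps η τ l (t+1) ε lam u (z+η) = brK η τ (z+η) c (t+1) := by
    rw [hc]; rfl
  have hfm : fEps η τ l (t+1) ε lam u (z-η) = brK η τ (z-η) c (t+1) := by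
    rw [hc]; rfl
  have hfn : fEps η τ l (t+1) ε lam (u+2*η) z = brK η τ z (c+η) (t+1) := by
    rw [hc, show ((ε*lam + u)/2 + (-l+1)*η) + η = (ε*lam + (u+2*η))/2 + (-l+1)*η from by ring]
    rfl
  -- evenness of θ₀b at ε λ/2
  have hev0 : theta 0 0 (ε*lam/2) (τ/2) = theta 0 0 (lam/2) (τ/2) := by
    rcases hε with h | h
    · rw [h, one_mul]
    · rw [h, show (-1:ℂ)*lam/2 = -(lam/2) from by ring]
      exact theta_even 0 0 (by norm_num) (lam/2) (τ/2)
  have hev1 : theta 0 1 (ε*lam/2) (τ/2) = theta 0 1 (lam/2) (τ/2) := by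
    rcases hε with h | h
    · rw [h, one_mul]
    · rw [h, show (-1:ℂ)*lam/2 = -(lam/2) from by ring]
      exact theta_even 1 1 (by norm_num) (lam/2) (τ/2)
  -- Landen instances
  have la1 : theta 0 1 (u/2 + z - l*η) (τ/2) * theta 0 0 (u/2 - z + l*η) (τ/2)
      = theta 0 1 u τ * theta 0 1 (2*(z - l*η)) τ + theta 1 1 u τ * theta 1 1 (2*(z - l*η)) τ := by
    have h := landen_a u (2*(z - l*η)) hτ
    rw [show (u + 2*(z - l*η))/2 = u/2 + z - l*η from by ring,
        show (u - 2*(z - l*η))/2 = u/2 - z + l*η from by ring] at h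
    exact h
  have lb1 : theta 0 1 (u/2 + z - l*η) (τ/2) * theta 0 1 (u/2 - z + l*η) (τ/2)
      = theta 0 0 u τ * theta 0 0 (2*(z - l*η)) τ - theta 1 0 u τ * theta 1 0 (2*(z - l*η)) τ := by
    have h := landen_b u (2*(z - l*η)) hτ
    rw [show (u + 2*(z - l*η))/2 = u/2 + z - l*η from by ring,
        show (u - 2*(z - l*η))/2 = u/2 - z + l*η from by ring] at h
    exact h
  have la2 : theta 0 1 (u/2 - z - l*η) (τ/2) * theta 0 0 (u/2 + z + l*η) (τ/2)
      = theta 0 1 u τ * theta 0 1 (2*(-z - l*η)) τ + theta 1 1 u τ * theta 1 1 (2*(-z - l*η)) τ := by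
    have h := landen_a u (2*(-z - l*η)) hτ
    rw [show (u + 2*(-z - l*η))/2 = u/2 - z - l*η from by ring,
        show (u - 2*(-z - l*η))/2 = u/2 + z + l*η from by ring] at h
    exact h
  have lb2 : theta 0 1 (u/2 - z - l*η) (τ/2) * theta 0 1 (u/2 + z + l*η) (τ/2)
      = theta 0 0 u τ * theta 0 0 (2*(-z - l*η)) τ - theta 1 0 u τ * theta 1 0 (2*(-z - l*η)) τ := by
    have h := landen_b u (2*(-z - l*η)) hτ
    rw [show (u + 2*(-z - l*η))/2 = u/2 - z - l*η from by ring,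
        show (u - 2*(-z - l*η))/2 = u/2 + z + l*η from by ring] at h
    exact h
  have lc1 : theta 0 0 (u/2 - z + l*η) (τ/2) * theta 0 1 m0 (τ/2)
        - theta 0 1 (u/2 - z + l*η) (τ/2) * theta 0 0 m0 (τ/2)
      = -2 * (theta 1 1 (-z + c + (2*(t:ℂ)+1)*η) τ * theta 1 1 ((u - ε*lam)/2 - l*η - z) τ) := by
    have h := landen_c (u/2 - z + l*η) m0 hτ
    rcases hε with h1' | h1'
    · rw [show u/2 - z + l*η + m0 = -z + c + (2*(t:ℂ)+1)*η from by
          rw [hm0, hc, h1']; push_cast at hl; linear_combination (-2*η)*hl,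
        show u/2 - z + l*η - m0 = (u - ε*lam)/2 - l*η - z from by rw [hm0, h1']; ring] at h
      exact h
    · rw [show u/2 - z + l*η + m0 = (u - ε*lam)/2 - l*η - z from by rw [hm0, h1']; ring,
        show u/2 - z + l*η - m0 = -z + c + (2*(t:ℂ)+1)*η from by
          rw [hm0, hc, h1']; push_cast at hl; linear_combination (-2*η)*hl] at h
      linear_combination h
  have lc2 : theta 0 0 (u/2 + z + l*η) (τ/2) * theta 0 1 m0 (τ/2)
        - theta 0 1 (u/2 + z + l*η) (τ/2) * theta 0 0 m0 (τ/2)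
      = -2 * (theta 1 1 (z + c + (2*(t:ℂ)+1)*η) τ * theta 1 1 ((u - ε*lam)/2 - l*η + z) τ) := by
    have h := landen_c (u/2 + z + l*η) m0 hτ
    rcases hε with h1' | h1'
    · rw [show u/2 + z + l*η + m0 = z + c + (2*(t:ℂ)+1)*η from by
          rw [hm0, hc, h1']; push_cast at hl; linear_combination (-2*η)*hl,
        show u/2 + z + l*η - m0 = (u - ε*lam)/2 - l*η + z from by rw [hm0, h1']; ring] at h
      exact h
    · rw [show u/2 + z + l*η + m0 = (u - ε*lam)/2 - l*η + z from by rw [hm0, h1']; ring,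
        show u/2 + z + l*η - m0 = z + c + (2*(t:ℂ)+1)*η from by
          rw [hm0, hc, h1']; push_cast at hl; linear_combination (-2*η)*hl] at h
      linear_combination h
  have k1 : theta 0 0 (u/2 - z - l*η) (τ/2) * theta 0 1 (lam/2) (τ/2)
        - theta 0 1 (u/2 - z - l*η) (τ/2) * theta 0 0 (lam/2) (τ/2)
      = -2 * (theta 1 1 (c - η - z) τ * theta 1 1 ((u - ε*lam)/2 - l*η - z) τ) := by
    have h := landen_c (u/2 - z - l*η) (ε*lam/2) hτ
    rw [show u/2 - z - l*η + ε*lam/2 = c - η - z from by rw [hc]; ring,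
        show u/2 - z - l*η - ε*lam/2 = (u - ε*lam)/2 - l*η - z from by ring,
        hev0, hev1] at h
    exact h
  have k2 : theta 0 0 (u/2 + z - l*η) (τ/2) * theta 0 1 (lam/2) (τ/2)
        - theta 0 1 (u/2 + z - l*η) (τ/2) * theta 0 0 (lam/2) (τ/2)
      = -2 * (theta 1 1 (c - η + z) τ * theta 1 1 ((u - ε*lam)/2 - l*η + z) τ) := by
    have h := landen_c (u/2 + z - l*η) (ε*lam/2) hτ
    rw [show u/2 + z - l*η + ε*lam/2 = c - η + z from by rw [hc]; ring,
        show u/2 + z - l*η - ε*lam/2 = (u - ε*lam)/2 - l*η + z from by ring,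
        hev0, hev1] at h
    exact h
  have k3 : theta 0 0 (u/2 + z - l*η) (τ/2) * theta 0 1 (u/2 - z - l*η) (τ/2)
        - theta 0 1 (u/2 + z - l*η) (τ/2) * theta 0 0 (u/2 - z - l*η) (τ/2)
      = -2 * (theta 1 1 (u - 2*l*η) τ * theta 1 1 (2*z) τ) := by
    have h := landen_c (u/2 + z - l*η) (u/2 - z - l*η) hτ
    rw [show u/2 + z - l*η + (u/2 - z - l*η) = u - 2*l*η from by ring,
        show u/2 + z - l*η - (u/2 - z - l*η) = 2*z from by ring] at h
    exact h
  have hstar : theta 0 1 (u/2 + z - l*η) (τ/2)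
          * (theta 1 1 (c - η - z) τ * theta 1 1 ((u - ε*lam)/2 - l*η - z) τ)
        - theta 0 1 (u/2 - z - l*η) (τ/2)
          * (theta 1 1 (c - η + z) τ * theta 1 1 ((u - ε*lam)/2 - l*η + z) τ)
      = -(theta 0 1 (lam/2) (τ/2)) * (theta 1 1 (u - 2*l*η) τ * theta 1 1 (2*z) τ) := by
    linear_combination (theta 0 1 (u/2 + z - l*η) (τ/2)/2) * k1
      - (theta 0 1 (u/2 - z - l*η) (τ/2)/2) * k2 + (theta 0 1 (lam/2) (τ/2)/2) * k3
  have hp'' : p' * theta 0 1 m0 (τ/2) = -theta 0 0 m0 (τ/2) := by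
    rw [hp']; field_simp
  have hAz : theta 0 1 m0 (τ/2) * (theta 1 1 u τ * theta 1 1 (2*(z - l*η)) τ
        + theta 0 1 u τ * theta 0 1 (2*(z - l*η)) τ
        - p' * (theta 1 0 u τ * theta 1 0 (2*(z - l*η)) τ
            - theta 0 0 u τ * theta 0 0 (2*(z - l*η)) τ))
      = -2 * (theta 0 1 (u/2 + z - l*η) (τ/2)
          * (theta 1 1 (-z + c + (2*(t:ℂ)+1)*η) τ * theta 1 1 ((u - ε*lam)/2 - l*η - z) τ)) := by
    linear_combination (-(theta 0 1 m0 (τ/2))) * la1 - p' * theta 0 1 m0 (τ/2) * lb1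
      + theta 0 1 (u/2 + z - l*η) (τ/2) * lc1
      + theta 0 1 (u/2 + z - l*η) (τ/2) * theta 0 1 (u/2 - z + l*η) (τ/2) * hp''
  have hAm : theta 0 1 m0 (τ/2) * (theta 1 1 u τ * theta 1 1 (2*(-z - l*η)) τ
        + theta 0 1 u τ * theta 0 1 (2*(-z - l*η)) τ
        - p' * (theta 1 0 u τ * theta 1 0 (2*(-z - l*η)) τ
            - theta 0 0 u τ * theta 0 0 (2*(-z - l*η)) τ))
      = -2 * (theta 0 1 (u/2 - z - l*η) (τ/2)
          * (theta 1 1 (z + c + (2*(t:ℂ)+1)*η) τ * theta 1 1 ((u - ε*lam)/2 - l*η + z) τ)) := by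
    linear_combination (-(theta 0 1 m0 (τ/2))) * la2 - p' * theta 0 1 m0 (τ/2) * lb2
      + theta 0 1 (u/2 - z - l*η) (τ/2) * lc2
      + theta 0 1 (u/2 - z - l*η) (τ/2) * theta 0 1 (u/2 + z + l*η) (τ/2) * hp''
  -- W–s cancellation lemmas
  have hW0z : W0 η τ u * s0f η τ (z - l*η) = theta 1 1 u τ * theta 1 1 (2*(z - l*η)) τ := by
    rw [W0, s0f]; field_simp
  have hW0m : W0 η τ u * s0f η τ (-z - l*η) = theta 1 1 u τ * theta 1 1 (2*(-z - l*η)) τ := by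
    rw [W0, s0f]; field_simp
  have hW3z : W3 η τ u * s3f η τ (z - l*η) = theta 0 1 u τ * theta 0 1 (2*(z - l*η)) τ := by
    rw [W3, s3f]; field_simp
  have hW3m : W3 η τ u * s3f η τ (-z - l*η) = theta 0 1 u τ * theta 0 1 (2*(-z - l*η)) τ := by
    rw [W3, s3f]; field_simp
  have hW1z : W1 η τ u * s1f η τ (z - l*η) = theta 1 0 u τ * theta 1 0 (2*(z - l*η)) τ := by
    rw [W1, s1f]; field_simp
  have hW1m : W1 η τ u * s1f η τ (-z - l*η) = theta 1 0 u τ * theta 1 0 (2*(-z - l*η)) τ := by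
    rw [W1, s1f]; field_simp
  have hW2z : Complex.I * W2 η τ u * s2f η τ (z - l*η)
      = -(theta 0 0 u τ * theta 0 0 (2*(z - l*η)) τ) := by
    rw [W2, s2f]; field_simp
    linear_combination (theta 0 0 u τ * theta 0 0 (2*(z - l*η)) τ) * Complex.I_sq
  have hW2m : Complex.I * W2 η τ u * s2f η τ (-z - l*η)
      = -(theta 0 0 u τ * theta 0 0 (2*(-z - l*η)) τ) := by
    rw [W2, s2f]; field_simp
    linear_combination (theta 0 0 u τ * theta 0 0 (2*(-z - l*η)) τ) * Complex.I_sq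
  have hPk : theta 0 1 m0 (τ/2) * (theta 0 1 (lam/2) (τ/2) / theta 0 1 m0 (τ/2))
      = theta 0 1 (lam/2) (τ/2) := by
    field_simp
  rw [hfp, hfm, hfn, brK_plus η τ z c t, brK_minus η τ z c t, brK_new η τ z c (t+1),
    PP_succ η τ c t z, PP_succ η τ c t (-z)]
  simp only [← mul_div_assoc, ← add_div, div_sub_div_same]
  rw [div_eq_iff hz]
  refine mul_left_cancel₀ h1 ?_
  linear_combination
    (theta 0 1 m0 (τ/2) * (PP η τ c t z * theta 1 1 (z + c + (2*(t:ℂ)+1)*η) τ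
        * theta 1 1 (c - η - z) τ * PP η τ c t (-z))) * hW0z
    + (theta 0 1 m0 (τ/2) * (PP η τ c t z * theta 1 1 (z + c + (2*(t:ℂ)+1)*η) τ
        * theta 1 1 (c - η - z) τ * PP η τ c t (-z))) * hW3z
    - (theta 0 1 m0 (τ/2) * p' * (PP η τ c t z * theta 1 1 (z + c + (2*(t:ℂ)+1)*η) τ
        * theta 1 1 (c - η - z) τ * PP η τ c t (-z))) * hW1z
    - (theta 0 1 m0 (τ/2) * p' * (PP η τ c t z * theta 1 1 (z + c + (2*(t:ℂ)+1)*η) τ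
        * theta 1 1 (c - η - z) τ * PP η τ c t (-z))) * hW2z
    - (theta 0 1 m0 (τ/2) * (theta 1 1 (c - η + z) τ * PP η τ c t z * PP η τ c t (-z)
        * theta 1 1 (-z + c + (2*(t:ℂ)+1)*η) τ)) * hW0m
    - (theta 0 1 m0 (τ/2) * (theta 1 1 (c - η + z) τ * PP η τ c t z * PP η τ c t (-z)
        * theta 1 1 (-z + c + (2*(t:ℂ)+1)*η) τ)) * hW3m
    + (theta 0 1 m0 (τ/2) * p' * (theta 1 1 (c - η + z) τ * PP η τ c t z * PP η τ c t (-z)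
        * theta 1 1 (-z + c + (2*(t:ℂ)+1)*η) τ)) * hW1m
    + (theta 0 1 m0 (τ/2) * p' * (theta 1 1 (c - η + z) τ * PP η τ c t z * PP η τ c t (-z)
        * theta 1 1 (-z + c + (2*(t:ℂ)+1)*η) τ)) * hW2m
    + (PP η τ c t z * theta 1 1 (z + c + (2*(t:ℂ)+1)*η) τ
        * theta 1 1 (c - η - z) τ * PP η τ c t (-z)) * hAz
    - (theta 1 1 (c - η + z) τ * PP η τ c t z * PP η τ c t (-z)
        * theta 1 1 (-z + c + (2*(t:ℂ)+1)*η) τ) * hAm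
    + (-2 * theta 1 1 (-z + c + (2*(t:ℂ)+1)*η) τ * theta 1 1 (z + c + (2*(t:ℂ)+1)*η) τ
        * PP η τ c t z * PP η τ c t (-z)) * hstar
    + (-(2 * theta 1 1 (u - 2*l*η) τ * theta 1 1 (2*z) τ * PP η τ c t z
        * theta 1 1 (z + c + (2*(t:ℂ)+1)*η) τ * PP η τ c t (-z)
        * theta 1 1 (-z + c + (2*(t:ℂ)+1)*η) τ)) * hPk
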